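/- For r ≥ 1, the number of images of the squaring map y ↦ y^2 on Z/2^r Z equals (2^(r-1) + 4)/3 if r is even, and (2^(r-1) + 5)/3 if r is odd. -/

import Mathlib

private lemma sqone (k : ℕ) :
    {x : ZMod (2 ^ (k + 3)) | x * x = 1} =
      (fun a : ℕ => (a : ZMod (2 ^ (k + 3)))) ''
        {1, 2 ^ (k + 2) - 1, 2 ^ (k + 2) + 1, 2 ^ (k + 3) - 1} := by
  haveI : NeZero (2 ^ (k + 3)) := ⟨by positivity⟩
  have hP : 4 ≤ 2 ^ (k + 2) := by
    calc (4:ℕ) = 2 ^ 2 := rfl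
    _ ≤ 2 ^ (k + 2) := Nat.pow_le_pow_right (by norm_num) (by omega)
  have hN : 2 ^ (k + 3) = 2 * 2 ^ (k + 2) := by ring
  ext x
  simp only [Set.mem_setOf_eq, Set.mem_image, Set.mem_insert_iff, Set.mem_singleton_iff]
  constructor
  · intro hx
    obtain ⟨a, ha, hxa⟩ : ∃ a : ℕ, a < 2 ^ (k + 3) ∧ (a : ZMod (2 ^ (k + 3))) = x :=
      ⟨x.val, ZMod.val_lt x, by simp [ZMod.natCast_val, ZMod.cast_id]⟩
    have hmod : a * a ≡ 1 [MOD 2 ^ (k + 3)] := by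
      have h1 : ((a * a : ℕ) : ZMod (2 ^ (k + 3))) = ((1 : ℕ) : ZMod (2 ^ (k + 3))) := by
        push_cast [hxa]; exact hx
      exact (ZMod.natCast_eq_natCast_iff _ _ _).mp h1
    haveI : Fact (1 < 2 ^ (k + 3)) := ⟨by omega⟩
    have hane : a ≠ 0 := by
      rintro rfl
      rw [← hxa] at hx
      norm_num at hx
    obtain ⟨b, rfl⟩ : ∃ b, a = b + 1 := ⟨a - 1, by omega⟩
    have hdvd : 2 ^ (k + 3) ∣ (b + 1) * (b + 1) - 1 :=
      (Nat.modEq_iff_dvd' (Nat.mul_pos b.succ_pos b.succ_pos)).mp hmod.symm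
    have hfac : (b + 1) * (b + 1) - 1 = b * (b + 2) := by
      have : (b + 1) * (b + 1) = b * (b + 2) + 1 := by ring
      omega
    rw [hfac] at hdvd
    -- b is even
    obtain ⟨c, rfl⟩ : ∃ c, b = 2 * c := by
      rcases Nat.even_or_odd b with ⟨c, rfl⟩ | ho
      · exact ⟨c, by ring⟩
      · exfalso
        have h2 : 2 ∣ b * (b + 2) := dvd_trans ⟨2 ^ (k + 2), hN⟩ hdvd
        have h3 : Odd (b * (b + 2)) := ho.mul (by rcases ho with ⟨t, rfl⟩; exact ⟨t + 1, by ring⟩)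
        simp [Nat.odd_iff] at h3
        omega
    have hdvd2 : 2 ^ (k + 1) ∣ c * (c + 1) := by
      have h4 : (2:ℕ) ^ (k + 3) = 4 * 2 ^ (k + 1) := by ring
      have : 2 * c * (2 * c + 2) = 4 * (c * (c + 1)) := by ring
      rw [this, h4] at hdvd
      exact (Nat.mul_dvd_mul_iff_left (by norm_num : (0:ℕ) < 4)).mp hdvd
    have hc : c < 2 ^ (k + 2) := by omega
    rcases Nat.even_or_odd c with hce | hco
    · -- c even, c+1 odd : 2^(k+1) ∣ c
      have hcop : Nat.Coprime (2 ^ (k + 1)) (c + 1) :=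
        Nat.Coprime.pow_left _ (by simp [Nat.coprime_two_left, Nat.odd_add_one, hce])
      have hdc : 2 ^ (k + 1) ∣ c := hcop.dvd_of_dvd_mul_right hdvd2
      obtain ⟨t, rfl⟩ := hdc
      have ht : t < 2 := by
        by_contra h
        push_neg at h
        have : 2 ^ (k + 1) * 2 ≤ 2 ^ (k + 1) * t := Nat.mul_le_mul_left _ h
        have h2 : (2:ℕ) ^ (k + 2) = 2 ^ (k + 1) * 2 := by ring
        omega
      interval_cases t
      · exact ⟨1, Or.inl rfl, by simpa using hxa⟩
      · refine ⟨2 ^ (k + 2) + 1, by tauto, ?_⟩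
        rw [← hxa]; congr 1; ring
    · -- c odd : 2^(k+1) ∣ c + 1
      have hcop : Nat.Coprime (2 ^ (k + 1)) c :=
        Nat.Coprime.pow_left _ (by simp [Nat.coprime_two_left, hco])
      have hdc : 2 ^ (k + 1) ∣ c + 1 := hcop.dvd_of_dvd_mul_left hdvd2
      obtain ⟨t, ht⟩ := hdc
      have ht2 : t = 1 ∨ t = 2 := by
        have h1 : 1 ≤ t := by
          rcases Nat.eq_zero_or_pos t with rfl | h; · omega
          · exact h
        have : t ≤ 2 := by
          by_contra h
          push_neg at h
          have : 2 ^ (k + 1) * 3 ≤ 2 ^ (k + 1) * t := Nat.mul_le_mul_left _ (by omega)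
          have h2 : (2:ℕ) ^ (k + 2) = 2 ^ (k + 1) * 2 := by ring
          omega
        omega
      rcases ht2 with rfl | rfl
      · refine ⟨2 ^ (k + 2) - 1, by tauto, ?_⟩
        rw [← hxa]; congr 1
        have h2 : (2:ℕ) ^ (k + 2) = 2 ^ (k + 1) * 2 := by ring
        omega
      · refine ⟨2 ^ (k + 3) - 1, by tauto, ?_⟩
        rw [← hxa]; congr 1
        have h2 : (2:ℕ) ^ (k + 2) = 2 ^ (k + 1) * 2 := by ring
        omega
  · rintro ⟨a, (rfl | rfl | rfl | rfl), rfl⟩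
    · norm_num
    · have h : ((2 ^ (k + 2) - 1) * (2 ^ (k + 2) - 1) : ℕ) ≡ 1 [MOD 2 ^ (k + 3)] := by
        rw [Nat.modEq_iff_dvd]
        push_cast [Nat.cast_sub (by omega : 1 ≤ 2 ^ (k + 2))]
        exact ⟨1 - 2 ^ (k + 1), by ring⟩
      have h2 := (ZMod.natCast_eq_natCast_iff _ _ _).mpr h
      push_cast at h2
      exact h2
    · have h : ((2 ^ (k + 2) + 1) * (2 ^ (k + 2) + 1) : ℕ) ≡ 1 [MOD 2 ^ (k + 3)] := by
        rw [Nat.modEq_iff_dvd]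
        push_cast
        exact ⟨-(2 ^ (k + 1)) - 1, by ring⟩
      have h2 := (ZMod.natCast_eq_natCast_iff _ _ _).mpr h
      push_cast at h2 ⊢
      exact h2
    · have h : ((2 ^ (k + 3) - 1) * (2 ^ (k + 3) - 1) : ℕ) ≡ 1 [MOD 2 ^ (k + 3)] := by
        rw [Nat.modEq_iff_dvd]
        push_cast [Nat.cast_sub (by omega : 1 ≤ 2 ^ (k + 3))]
        exact ⟨2 - 2 ^ (k + 3), by ring⟩
      have h2 := (ZMod.natCast_eq_natCast_iff _ _ _).mpr h
      push_cast at h2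
      exact h2



private lemma card_sqone (k : ℕ) :
    Nat.card {x : ZMod (2 ^ (k + 3)) | x * x = 1} = 4 := by
  haveI : NeZero (2 ^ (k + 3)) := ⟨by positivity⟩
  have hP : 4 ≤ 2 ^ (k + 2) := by
    calc (4:ℕ) = 2 ^ 2 := rfl
    _ ≤ 2 ^ (k + 2) := Nat.pow_le_pow_right (by norm_num) (by omega)
  have hN : 2 ^ (k + 3) = 2 * 2 ^ (k + 2) := by ring
  rw [Nat.card_coe_set_eq, sqone]
  have hmem : ∀ a ∈ ({1, 2 ^ (k + 2) - 1, 2 ^ (k + 2) + 1, 2 ^ (k + 3) - 1} : Set ℕ),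
      a < 2 ^ (k + 3) := by
    rintro a (rfl | rfl | rfl | rfl) <;> omega
  have hinj : Set.InjOn (fun a : ℕ => (a : ZMod (2 ^ (k + 3))))
      ({1, 2 ^ (k + 2) - 1, 2 ^ (k + 2) + 1, 2 ^ (k + 3) - 1} : Set ℕ) := by
    intro a ha b hb h
    have := congrArg ZMod.val h
    rwa [ZMod.val_cast_of_lt (hmem a ha), ZMod.val_cast_of_lt (hmem b hb)] at this
  rw [Set.ncard_image_of_injOn hinj]
  rw [Set.ncard_insert_of_notMem (by simp; omega) (Set.toFinite _),
      Set.ncard_insert_of_notMem (by simp; omega) (Set.toFinite _),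
      Set.ncard_insert_of_notMem (by simp; omega) (Set.toFinite _),
      Set.ncard_singleton]



private lemma card_odd_squares (k : ℕ) :
    (Set.range (fun z : ZMod (2 ^ (k + 3)) => (2 * z + 1) ^ 2)).ncard = 2 ^ k := by
  haveI : NeZero (2 ^ (k + 3)) := ⟨by positivity⟩
  set N := 2 ^ (k + 3) with hNdef
  set f : (ZMod N)ˣ →* (ZMod N)ˣ := powMonoidHom 2 with hf
  have hfapp : ∀ u : (ZMod N)ˣ, f u = u ^ 2 := fun u => rfl
  -- the set of odd squares is the image of the range of f
  have hO : Set.range (fun z : ZMod N => (2 * z + 1) ^ 2)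
      = Units.val '' (f.range : Set (ZMod N)ˣ) := by
    ext x
    constructor
    · rintro ⟨z, rfl⟩
      have hodd : Odd (2 * z.val + 1) := ⟨z.val, by ring⟩
      have hu : IsUnit (2 * z + 1) := by
        have : ((2 * z.val + 1 : ℕ) : ZMod N) = 2 * z + 1 := by
          push_cast [ZMod.natCast_val, ZMod.cast_id]; ring
        rw [← this]
        rw [ZMod.isUnit_iff_coprime]
        exact Nat.Coprime.pow_right _ (Nat.coprime_two_right.mpr hodd)
      refine ⟨f hu.unit, ⟨hu.unit, rfl⟩, ?_⟩
      simp [hfapp, hu.unit_spec]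
    · rintro ⟨_, ⟨u, rfl⟩, rfl⟩
      have hcop := ZMod.val_coe_unit_coprime u
      have hodd : (u : ZMod N).val % 2 = 1 := by
        rcases Nat.even_or_odd (u : ZMod N).val with ⟨t, ht⟩ | ho
        · exfalso
          have h2 : (2:ℕ) ∣ N := ⟨2 ^ (k + 2), by rw [hNdef]; ring⟩
          have h3 : (2:ℕ) ∣ Nat.gcd (u : ZMod N).val N := Nat.dvd_gcd ⟨t, by omega⟩ h2
          have h4 : Nat.gcd (u : ZMod N).val N = 1 := hcop
          omega
        · rcases ho with ⟨t, ht⟩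
          omega
      refine ⟨(((u : ZMod N).val / 2 : ℕ) : ZMod N), ?_⟩
      have hval : (2 * ((((u : ZMod N).val / 2 : ℕ) : ZMod N)) + 1) = (u : ZMod N) := by
        have : ((2 * ((u : ZMod N).val / 2) + 1 : ℕ) : ZMod N) = (u : ZMod N) := by
          rw [show 2 * ((u : ZMod N).val / 2) + 1 = (u : ZMod N).val by omega]
          simp [ZMod.natCast_val, ZMod.cast_id]
        push_cast at this
        exact this
      show (2 * ((((u : ZMod N).val / 2 : ℕ) : ZMod N)) + 1) ^ 2 = ((f u : (ZMod N)ˣ) : ZMod N)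
      rw [hval, hfapp]
      simp [Units.val_pow_eq_pow_val]
  rw [hO, Set.ncard_image_of_injective _ Units.val_injective]
  -- count the range of f via its kernel
  have hcard : Nat.card (ZMod N)ˣ = 2 ^ (k + 2) := by
    rw [Nat.card_eq_fintype_card, ZMod.card_units_eq_totient,
      hNdef, Nat.totient_prime_pow Nat.prime_two (by omega)]
    norm_num
  have hker : Nat.card f.ker = 4 := by
    have e : f.ker ≃ {x : ZMod N | x * x = 1} :=
      { toFun := fun u => ⟨((u : (ZMod N)ˣ) : ZMod N), by
          have h : ((u : (ZMod N)ˣ)) ^ 2 = 1 := (MonoidHom.mem_ker).mp u.2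
          have := congrArg Units.val h
          simpa [sq, Units.val_mul] using this⟩
        invFun := fun x => ⟨Units.mkOfMulEqOne x.1 x.1 x.2, by
          rw [MonoidHom.mem_ker, hfapp]
          ext
          simp [sq, Units.val_mul, Units.val_mkOfMulEqOne]
          exact x.2⟩
        left_inv := fun u => by
          ext
          simp [Units.val_mkOfMulEqOne]
        right_inv := fun x => rfl }
    rw [Nat.card_congr e]
    exact card_sqone k
  have hquot := Subgroup.card_eq_card_quotient_mul_card_subgroup f.ker
  rw [Nat.card_congr (QuotientGroup.quotientKerEquivRange f).toEquiv, hker, hcard] at hquot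
  have hrange : (f.range : Set (ZMod N)ˣ).ncard = Nat.card f.range := by
    rw [← Nat.card_coe_set_eq]
    congr 1
  rw [hrange]
  have h4 : (2:ℕ) ^ (k + 2) = 2 ^ k * 4 := by ring
  omega



private lemma val_parity {N : ℕ} [NeZero N] (hN : 2 ∣ N) (a : ℕ) :
    ((a : ZMod N).val) % 2 = a % 2 := by
  rw [ZMod.val_natCast]
  have h2 : 2 ∣ N * (a / N) := hN.mul_right _
  have heq := Nat.mod_add_div a N
  omega

private lemma card_rec (k : ℕ) :
    Nat.card (Set.range (fun y : ZMod (2 ^ (k + 3)) => y ^ 2)) =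
      Nat.card (Set.range (fun y : ZMod (2 ^ (k + 1)) => y ^ 2)) + 2 ^ k := by
  haveI : NeZero (2 ^ (k + 3)) := ⟨by positivity⟩
  haveI : NeZero (2 ^ (k + 1)) := ⟨by positivity⟩
  have hdvd2 : (2:ℕ) ∣ 2 ^ (k + 3) := ⟨2 ^ (k + 2), by ring⟩
  have hkey : ∀ a : ℕ, ((4 * (a % 2 ^ (k + 1)) : ℕ) : ZMod (2 ^ (k + 3)))
      = ((4 * a : ℕ) : ZMod (2 ^ (k + 3))) := by
    intro a
    rw [ZMod.natCast_eq_natCast_iff]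
    have h := (Nat.mod_modEq a (2 ^ (k + 1))).mul_left' (c := 4)
    have h2 : 4 * 2 ^ (k + 1) = 2 ^ (k + 3) := by ring
    rwa [h2] at h
  -- decomposition into even and odd squares
  have hsplit : Set.range (fun y : ZMod (2 ^ (k + 3)) => y ^ 2)
      = Set.range (fun z : ZMod (2 ^ (k + 3)) => (2 * z) ^ 2)
        ∪ Set.range (fun z : ZMod (2 ^ (k + 3)) => (2 * z + 1) ^ 2) := by
    ext x
    constructor
    · rintro ⟨y, rfl⟩
      have hy : ((y.val : ℕ) : ZMod (2 ^ (k + 3))) = y := by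
        simp [ZMod.natCast_val, ZMod.cast_id]
      rcases Nat.even_or_odd y.val with ⟨t, ht⟩ | ⟨t, ht⟩
      · left
        refine ⟨((t : ℕ) : ZMod (2 ^ (k + 3))), ?_⟩
        have : ((2 * t : ℕ) : ZMod (2 ^ (k + 3))) = y := by rw [← hy]; congr 1; omega
        push_cast at this
        simp only [this]
      · right
        refine ⟨((t : ℕ) : ZMod (2 ^ (k + 3))), ?_⟩
        have : ((2 * t + 1 : ℕ) : ZMod (2 ^ (k + 3))) = y := by rw [← hy]; congr 1; omega
        push_cast at this
        simp only [this]
    · rintro (⟨z, rfl⟩ | ⟨z, rfl⟩)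
      exacts [⟨2 * z, rfl⟩, ⟨2 * z + 1, rfl⟩]
  have hdisj : Disjoint (Set.range (fun z : ZMod (2 ^ (k + 3)) => (2 * z) ^ 2))
      (Set.range (fun z : ZMod (2 ^ (k + 3)) => (2 * z + 1) ^ 2)) := by
    rw [Set.disjoint_left]
    rintro x ⟨z, rfl⟩ ⟨w, hw⟩
    have h1 : (((2 * z) ^ 2).val) % 2 = 0 := by
      have : (2 * z) ^ 2 = ((4 * (z.val * z.val) : ℕ) : ZMod (2 ^ (k + 3))) := by
        push_cast [ZMod.natCast_val, ZMod.cast_id]; ring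
      rw [this, val_parity hdvd2]
      omega
    have h2 : (((2 * w + 1) ^ 2).val) % 2 = 1 := by
      have : (2 * w + 1) ^ 2
          = ((4 * (w.val * w.val) + 4 * w.val + 1 : ℕ) : ZMod (2 ^ (k + 3))) := by
        push_cast [ZMod.natCast_val, ZMod.cast_id]; ring
      rw [this, val_parity hdvd2]
      omega
    have hw' : (2 * w + 1) ^ 2 = (2 * z) ^ 2 := hw
    rw [hw'] at h2
    omega
  -- even squares biject with squares mod 2^(k+1)
  set ι : ZMod (2 ^ (k + 1)) → ZMod (2 ^ (k + 3)) :=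
    fun x => ((4 * x.val : ℕ) : ZMod (2 ^ (k + 3))) with hι
  have hιinj : Function.Injective ι := by
    intro x y h
    have hx : 4 * x.val < 2 ^ (k + 3) := by
      have := ZMod.val_lt x
      have h2 : (2:ℕ) ^ (k + 3) = 4 * 2 ^ (k + 1) := by ring
      omega
    have hy : 4 * y.val < 2 ^ (k + 3) := by
      have := ZMod.val_lt y
      have h2 : (2:ℕ) ^ (k + 3) = 4 * 2 ^ (k + 1) := by ring
      omega
    have := congrArg ZMod.val h
    rw [hι] at this
    simp only [ZMod.val_cast_of_lt hx, ZMod.val_cast_of_lt hy] at this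
    exact ZMod.val_injective _ (by omega)
  have hE : Set.range (fun z : ZMod (2 ^ (k + 3)) => (2 * z) ^ 2)
      = ι '' Set.range (fun y : ZMod (2 ^ (k + 1)) => y ^ 2) := by
    ext x
    constructor
    · rintro ⟨z, rfl⟩
      refine ⟨((z.val : ℕ) : ZMod (2 ^ (k + 1))) ^ 2, ⟨_, rfl⟩, ?_⟩
      have hv : (((z.val : ℕ) : ZMod (2 ^ (k + 1))) ^ 2)
          = ((z.val * z.val : ℕ) : ZMod (2 ^ (k + 1))) := by push_cast; ring
      rw [hι]
      simp only [hv, ZMod.val_natCast]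
      rw [hkey]
      push_cast [ZMod.natCast_val, ZMod.cast_id]
      ring
    · rintro ⟨_, ⟨y, rfl⟩, rfl⟩
      refine ⟨((y.val : ℕ) : ZMod (2 ^ (k + 3))), ?_⟩
      have hv : (y ^ 2) = ((y.val * y.val : ℕ) : ZMod (2 ^ (k + 1))) := by
        push_cast [ZMod.natCast_val, ZMod.cast_id]; ring
      rw [hι]
      simp only [hv, ZMod.val_natCast]
      rw [hkey]
      push_cast
      ring
  rw [Nat.card_coe_set_eq, Nat.card_coe_set_eq, hsplit,
    Set.ncard_union_eq hdisj (Set.toFinite _) (Set.toFinite _), hE,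
    Set.ncard_image_of_injective _ hιinj, card_odd_squares]


private lemma base_one :
    Nat.card (Set.range (fun y : ZMod (2 ^ 1) => y ^ 2)) = 2 := by
  rw [Nat.card_coe_set_eq, Set.ncard_eq_toFinset_card', Set.toFinset_range]
  decide

private lemma base_two :
    Nat.card (Set.range (fun y : ZMod (2 ^ 2) => y ^ 2)) = 2 := by
  rw [Nat.card_coe_set_eq, Set.ncard_eq_toFinset_card', Set.toFinset_range]
  decide

private lemma aux : ∀ r : ℕ, 1 ≤ r →
    3 * Nat.card (Set.range (fun y : ZMod (2 ^ r) => y ^ 2))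
      = 2 ^ (r - 1) + (if Even r then 4 else 5)
  | 0, h => by omega
  | 1, _ => by rw [base_one]; norm_num
  | 2, _ => by rw [base_two]; norm_num
  | (k+3), _ => by
    have ih := aux (k + 1) (by omega)
    rw [card_rec k]
    have hpar : Even (k + 3) ↔ Even (k + 1) := by
      simp [Nat.even_add_one, parity_simps]
    have h4 : (2:ℕ) ^ (k + 2) = 4 * 2 ^ k := by ring
    simp only [show k + 3 - 1 = k + 2 from rfl, show k + 1 - 1 = k from rfl] at *
    rcases Nat.even_or_odd (k + 3) with he | ho
    · rw [if_pos he] at *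
      rw [if_pos (hpar.mp he)] at ih
      omega
    · rw [if_neg (Nat.not_even_iff_odd.mpr ho)] at *
      rw [if_neg (by rw [← hpar]; exact Nat.not_even_iff_odd.mpr ho)] at ih
      omega

theorem card_squares_twoPower (r : ℕ) (hr : 1 ≤ r) :
    (Even r →
      Nat.card (Set.range (fun y : ZMod (2 ^ r) => y ^ 2)) = (2 ^ (r - 1) + 4) / 3) ∧
    (Odd r →
      Nat.card (Set.range (fun y : ZMod (2 ^ r) => y ^ 2)) = (2 ^ (r - 1) + 5) / 3) := by
  have h := aux r hr
  constructor
  · intro he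
    rw [if_pos he] at h
    omega
  · intro ho
    rw [if_neg (Nat.not_even_iff_odd.mpr ho)] at h
    omega
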